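/- Let w : [0,1] → [0,1] be continuous, strictly increasing, with w(0) = 0 and w(1) = 1, and let x, y ∈ ℝ^t be outcome profiles with nonnegative entries. Then the set C = {p ∈ Δ^{t−1} : Ṽ(p,x) ≥ Ṽ(p,y)} is a connected subset of the simplex Δ^{t−1}. -/

import Mathlib

/-- The decision-weight form of the CPT value of the prospect `(p, z)` with
reference point `r`, value function `v`, probability weighting functions
`wp` (for gains) and `wm` (for losses), computed using a permutation `a`
of the indices ordering `z` decreasingly. -/
noncomputable def cptVal {t : ℕ} (wp wm v : ℝ → ℝ) (r : ℝ) (p z : Fin t → ℝ)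
    (a : Equiv.Perm (Fin t)) : ℝ :=
  ∑ j : Fin t,
    (if r ≤ z (a j) then
        wp (∑ k ∈ Finset.Iic j, p (a k)) - wp (∑ k ∈ Finset.Iio j, p (a k))
      else
        wm (∑ k ∈ Finset.Ici j, p (a k)) - wm (∑ k ∈ Finset.Ioi j, p (a k)))
      * v (z (a j))

/-- The CPT value `V^r(p,z)`, computed with a canonical permutation ordering `z`
decreasingly (the value is independent of the choice of such a permutation). -/
noncomputable def CPT {t : ℕ} (wp wm v : ℝ → ℝ) (r : ℝ) (p z : Fin t → ℝ) : ℝ :=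
  cptVal wp wm v r p z (Tuple.sort (fun j => -z j))

/-- `Ṽ(p,x)`: the CPT value of a nonnegative outcome profile `x` with reference
point `0`, identity value function, and single probability weighting function `w`.
For a probability vector `p` (and `w 1 = 1`) this agrees with
`x_{a_t} + ∑_{j<t} w(p_{a_1}+⋯+p_{a_j})(x_{a_j} − x_{a_{j+1}})` for any permutation
`a` ordering `x` decreasingly. -/
noncomputable def tildeV {t : ℕ} (w : ℝ → ℝ) (p x : Fin t → ℝ) : ℝ :=
  CPT w w id 0 p x

/-- `p` is a probability vector. -/
def IsProbVec {t : ℕ} (p : Fin t → ℝ) : Prop :=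
  (∀ j, 0 ≤ p j) ∧ ∑ j, p j = 1

open Finset
namespace SDCC
variable {t : ℕ}

/-- the sorting permutation: `x ∘ sp x` is nonincreasing. -/
noncomputable def sp (x : Fin t → ℝ) : Equiv.Perm (Fin t) := Tuple.sort (fun j => -x j)

/-- `v` rearranged by the sort of `x`, as a ℕ-indexed sequence (0 beyond `t`). -/
noncomputable def sv (x v : Fin t → ℝ) : ℕ → ℝ :=
  fun k => if h : k < t then v (sp x ⟨k, h⟩) else 0

/-- cumulative sums of `v` in `x`-sorted order. -/
noncomputable def cums (x v : Fin t → ℝ) (m : ℕ) : ℝ := ∑ k ∈ range m, sv x v k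

/-- mass of `v` on the superlevel set `{i : c ≤ x i}`. -/
noncomputable def SX (x v : Fin t → ℝ) (c : ℝ) : ℝ :=
  ∑ i ∈ univ.filter (fun i => c ≤ x i), v i

lemma sv_apply (x v : Fin t → ℝ) (j : Fin t) : sv x v (j : ℕ) = v (sp x j) := by
  simp [sv, j.2, Fin.eta]

lemma sv_anti {x : Fin t → ℝ} (hx : ∀ j, 0 ≤ x j) : Antitone (sv x x) := by
  intro j k hjk
  by_cases hk : k < t
  · have hj : j < t := lt_of_le_of_lt hjk hk
    have := Tuple.monotone_sort (fun j => -x j)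
      (a := (⟨j, hj⟩ : Fin t)) (b := (⟨k, hk⟩ : Fin t)) (by exact hjk)
    simp only [Function.comp] at this
    simp only [sv, dif_pos hj, dif_pos hk, sp]
    linarith
  · by_cases hj : j < t
    · simp only [sv, dif_pos hj, dif_neg hk]
      exact hx _
    · simp [sv, dif_neg hj, dif_neg hk]

lemma sv_nonneg {x v : Fin t → ℝ} (hv : ∀ j, 0 ≤ v j) (k : ℕ) : 0 ≤ sv x v k := by
  unfold sv; split <;> simp [hv]

lemma cums_mono {x v : Fin t → ℝ} (hv : ∀ j, 0 ≤ v j) : Monotone (cums x v) :=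
  fun _ _ h => Finset.sum_le_sum_of_subset_of_nonneg (by simpa using h)
    (fun k _ _ => sv_nonneg hv k)

lemma cums_of_t_le {x v : Fin t → ℝ} {n : ℕ} (hn : t ≤ n) : cums x v n = ∑ j, v j := by
  have h1 : cums x v n = cums x v t := by
    unfold cums
    rw [← Finset.sum_subset (Finset.range_subset_range.2 hn)]
    intro k _ hk
    simp only [mem_range, not_lt] at hk
    simp [sv, not_lt.2 hk]
  rw [h1]
  unfold cums
  rw [← Fin.sum_univ_eq_sum_range (fun k => sv x v k) t]
  rw [show (∑ j, v j) = ∑ j, v (sp x j) from (Equiv.sum_comp (sp x) v).symm]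
  exact Finset.sum_congr rfl fun j _ => sv_apply x v j

lemma cums_nonneg {x v : Fin t → ℝ} (hv : ∀ j, 0 ≤ v j) (m : ℕ) : 0 ≤ cums x v m :=
  Finset.sum_nonneg fun k _ => sv_nonneg hv k

lemma cums_le_one {x v : Fin t → ℝ} (hv : ∀ j, 0 ≤ v j) (hs : ∑ j, v j = 1) (m : ℕ) :
    cums x v m ≤ 1 := by
  calc cums x v m ≤ cums x v (max m t) := cums_mono hv (le_max_left _ _)
    _ = 1 := by rw [cums_of_t_le (le_max_right _ _), hs]

lemma sum_Iic_fin (f : Fin t → ℝ) (j : Fin t) :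
    ∑ k ∈ Iic j, f k = ∑ k ∈ range ((j : ℕ)+1), (if h : k < t then f ⟨k, h⟩ else 0) := by
  refine Finset.sum_nbij' (fun (k : Fin t) => (k : ℕ))
    (fun k => if h : k < t then (⟨k, h⟩ : Fin t) else j) ?_ ?_ ?_ ?_ ?_
  · intro k hk
    simp only [mem_Iic] at hk
    simp only [mem_range]
    omega
  · intro k hk
    simp only [mem_range] at hk
    have hkt : k < t := by have := j.2; omega
    simp only [dif_pos hkt, mem_Iic, Fin.le_def, Fin.val_mk]
    omega
  · intro k hk; simp [k.2]
  · intro k hk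
    simp only [mem_range] at hk
    have hkt : k < t := by have := j.2; omega
    simp [dif_pos hkt]
  · intro k hk
    simp [k.2]

lemma sum_Iio_fin (f : Fin t → ℝ) (j : Fin t) :
    ∑ k ∈ Iio j, f k = ∑ k ∈ range (j : ℕ), (if h : k < t then f ⟨k, h⟩ else 0) := by
  refine Finset.sum_nbij' (fun (k : Fin t) => (k : ℕ))
    (fun k => if h : k < t then (⟨k, h⟩ : Fin t) else j) ?_ ?_ ?_ ?_ ?_
  · intro k hk
    simp only [mem_Iio] at hk
    simp only [mem_range]
    omega
  · intro k hk
    simp only [mem_range] at hk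
    have hkt : k < t := by have := j.2; omega
    simp only [dif_pos hkt, mem_Iio, Fin.lt_def, Fin.val_mk]
    omega
  · intro k hk; simp [k.2]
  · intro k hk
    simp only [mem_range] at hk
    have hkt : k < t := by have := j.2; omega
    simp [dif_pos hkt]
  · intro k hk
    simp [k.2]

lemma tildeV_eq_sum {w : ℝ → ℝ} (hw0 : w 0 = 0) {x : Fin t → ℝ} (hx : ∀ j, 0 ≤ x j)
    (v : Fin t → ℝ) :
    tildeV w v x = ∑ j ∈ range t, w (cums x v (j+1)) * (sv x x j - sv x x (j+1)) := by
  have step1 : tildeV w v x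
      = ∑ j : Fin t, (w (cums x v ((j : ℕ)+1)) - w (cums x v (j : ℕ))) * sv x x (j : ℕ) := by
    unfold tildeV CPT cptVal
    refine Finset.sum_congr rfl fun j _ => ?_
    rw [if_pos (hx _)]
    rw [show (Tuple.sort fun j => -x j) = sp x from rfl]
    rw [sum_Iic_fin (fun k => v (sp x k)) j, sum_Iio_fin (fun k => v (sp x k)) j]
    rw [sv_apply]
    show (w (∑ k ∈ range ((j:ℕ)+1), _) - w (∑ k ∈ range (j:ℕ), _)) * id (x (sp x j)) = _
    rw [id]
    congr 2
  rw [step1]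
  rw [Fin.sum_univ_eq_sum_range
    (fun j => (w (cums x v (j+1)) - w (cums x v j)) * sv x x j) t]
  have hW0 : w (cums x v 0) = 0 := by simp [cums, hw0]
  have hXt : sv x x t = 0 := by simp [sv]
  have key : ∑ j ∈ range t, w (cums x v j) * sv x x j
      = ∑ j ∈ range t, w (cums x v (j+1)) * sv x x (j+1) := by
    rcases Nat.eq_zero_or_pos t with ht | ht
    · simp [ht]
    obtain ⟨n, rfl⟩ := Nat.exists_eq_add_of_lt ht
    simp only [Nat.zero_add] at *
    rw [Finset.sum_range_succ' (fun j => w (cums x v j) * sv x x j) n]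
    rw [Finset.sum_range_succ (fun j => w (cums x v (j+1)) * sv x x (j+1)) n]
    rw [hW0, hXt]
    ring
  calc ∑ j ∈ range t, (w (cums x v (j+1)) - w (cums x v j)) * sv x x j
      = ∑ j ∈ range t, (w (cums x v (j+1)) * sv x x j - w (cums x v j) * sv x x j) := by
        refine Finset.sum_congr rfl fun j _ => by ring
    _ = ∑ j ∈ range t, w (cums x v (j+1)) * sv x x j
        - ∑ j ∈ range t, w (cums x v j) * sv x x j := Finset.sum_sub_distrib _ _
    _ = ∑ j ∈ range t, w (cums x v (j+1)) * sv x x j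
        - ∑ j ∈ range t, w (cums x v (j+1)) * sv x x (j+1) := by rw [key]
    _ = ∑ j ∈ range t, (w (cums x v (j+1)) * sv x x j - w (cums x v (j+1)) * sv x x (j+1)) :=
        (Finset.sum_sub_distrib _ _).symm
    _ = ∑ j ∈ range t, w (cums x v (j+1)) * (sv x x j - sv x x (j+1)) := by
        refine Finset.sum_congr rfl fun j _ => by ring

lemma SX_eq_sum_range (x v : Fin t → ℝ) (c : ℝ) :
    SX x v c = ∑ k ∈ range t, if c ≤ sv x x k then sv x v k else 0 := by
  rw [← Fin.sum_univ_eq_sum_range (fun k => if c ≤ sv x x k then sv x v k else 0) t]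
  rw [SX, Finset.sum_filter]
  refine Eq.symm ?_
  calc ∑ k : Fin t, (if c ≤ sv x x (k : ℕ) then sv x v (k : ℕ) else 0)
      = ∑ k : Fin t, (if c ≤ x (sp x k) then v (sp x k) else 0) :=
        Finset.sum_congr rfl fun k _ => by rw [sv_apply, sv_apply]
    _ = ∑ i : Fin t, (if c ≤ x i then v i else 0) :=
        Equiv.sum_comp (sp x) (fun i => if c ≤ x i then v i else 0)

lemma SX_nonneg {x v : Fin t → ℝ} (hv : ∀ j, 0 ≤ v j) (c : ℝ) : 0 ≤ SX x v c :=
  Finset.sum_nonneg fun i _ => hv i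

lemma SX_le_one {x v : Fin t → ℝ} (hv : ∀ j, 0 ≤ v j) (hs : ∑ j, v j = 1) (c : ℝ) :
    SX x v c ≤ 1 := by
  rw [← hs]
  exact Finset.sum_le_sum_of_subset_of_nonneg (Finset.filter_subset _ _)
    (fun i _ _ => hv i)

lemma cums_eq_SX {x : Fin t → ℝ} (hx : ∀ j, 0 ≤ x j) (v : Fin t → ℝ) {j : ℕ} (hj : j < t)
    (hdrop : ∀ k, j < k → k < t → sv x x k < sv x x j) :
    cums x v (j+1) = SX x v (sv x x j) := by
  have hset : range (j+1) = (range t).filter (fun k => sv x x j ≤ sv x x k) := by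
    ext k
    simp only [mem_range, mem_filter]
    constructor
    · intro hk
      exact ⟨by omega, sv_anti hx (by omega)⟩
    · rintro ⟨hkt, hle⟩
      by_contra h
      exact absurd hle (not_le.2 (hdrop k (by omega) hkt))
  rw [cums, hset, Finset.sum_filter, ← SX_eq_sum_range]

lemma downward_closed_eq_range {s : Finset ℕ}
    (hdc : ∀ k ∈ s, ∀ j, j ≤ k → j ∈ s) : s = range s.card := by
  have hsub' : ∀ k, k < s.card → k ∈ s := by
    intro k hk
    by_contra hks
    have hsr : s ⊆ range k := by
      intro j hj
      rcases lt_or_ge j k with h | h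
      · exact mem_range.2 h
      · exact absurd (hdc j hj k h) hks
    have := Finset.card_le_card hsr
    simp only [Finset.card_range] at this
    omega
  exact (Finset.eq_of_subset_of_card_le (fun k hk => hsub' k (mem_range.1 hk))
    (by simp)).symm

lemma exists_prefix {x : Fin t → ℝ} (hx : ∀ j, 0 ≤ x j) (c : ℝ) :
    ∃ m ≤ t, ∀ v : Fin t → ℝ, SX x v c = cums x v m := by
  set s := (range t).filter (fun k => c ≤ sv x x k) with hs
  have hdc : ∀ k ∈ s, ∀ j, j ≤ k → j ∈ s := by
    intro k hk j hjk
    simp only [hs, mem_filter, mem_range] at hk ⊢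
    exact ⟨by omega, le_trans hk.2 (sv_anti hx hjk)⟩
  obtain ⟨m, hm⟩ : ∃ m, m = s.card := ⟨_, rfl⟩
  refine ⟨m, hm ▸ le_trans (Finset.card_le_card (Finset.filter_subset _ _)) (by simp), ?_⟩
  intro v
  have hsr : s = range m := hm ▸ downward_closed_eq_range hdc
  rw [SX_eq_sum_range, ← Finset.sum_filter, ← hs, hsr]
  rfl

lemma tildeV_le {w : ℝ → ℝ} (hwm : StrictMonoOn w (Set.Icc 0 1)) (hw0 : w 0 = 0)
    {x : Fin t → ℝ} (hx : ∀ j, 0 ≤ x j) {p q : Fin t → ℝ}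
    (hp : IsProbVec p) (hq : IsProbVec q)
    (h : ∀ c, SX x p c ≤ SX x q c) :
    tildeV w p x ≤ tildeV w q x := by
  rw [tildeV_eq_sum hw0 hx p, tildeV_eq_sum hw0 hx q]
  refine Finset.sum_le_sum fun j hj => ?_
  by_cases hdj : sv x x (j+1) < sv x x j
  · have hdrop : ∀ k, j < k → k < t → sv x x k < sv x x j := fun k hk hkt =>
      lt_of_le_of_lt (sv_anti hx (by omega : j+1 ≤ k)) hdj
    have hjt : j < t := mem_range.1 hj
    rw [cums_eq_SX hx p hjt hdrop, cums_eq_SX hx q hjt hdrop]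
    refine mul_le_mul_of_nonneg_right ?_ (by linarith)
    exact hwm.monotoneOn ⟨SX_nonneg hp.1 _, SX_le_one hp.1 hp.2 _⟩
      ⟨SX_nonneg hq.1 _, SX_le_one hq.1 hq.2 _⟩ (h _)
  · have hd : sv x x (j+1) ≤ sv x x j := sv_anti hx (Nat.le_succ j)
    have : sv x x j - sv x x (j+1) = 0 := by
      have := not_lt.1 hdj; linarith
    rw [this, mul_zero, mul_zero]

lemma exists_winv {w : ℝ → ℝ} (hwc : ContinuousOn w (Set.Icc 0 1))
    (hwm : StrictMonoOn w (Set.Icc 0 1)) (hw0 : w 0 = 0) (hw1 : w 1 = 1) :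
    ∃ g : ℝ → ℝ, Continuous g ∧ (∀ u, g u ∈ Set.Icc (0:ℝ) 1) ∧
      (∀ u ∈ Set.Icc (0:ℝ) 1, w (g u) = u) ∧ (∀ c ∈ Set.Icc (0:ℝ) 1, g (w c) = c) := by
  have h01 : (0:ℝ) ≤ 1 := zero_le_one
  have hmem0 : (0:ℝ) ∈ Set.Icc (0:ℝ) 1 := by constructor <;> norm_num
  have hmem1 : (1:ℝ) ∈ Set.Icc (0:ℝ) 1 := by constructor <;> norm_num
  have hwmem : ∀ c ∈ Set.Icc (0:ℝ) 1, w c ∈ Set.Icc (0:ℝ) 1 := by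
    intro c hc
    constructor
    · rw [← hw0]; exact hwm.monotoneOn hmem0 hc hc.1
    · rw [← hw1]; exact hwm.monotoneOn hc hmem1 hc.2
  set fn : Set.Icc (0:ℝ) 1 → Set.Icc (0:ℝ) 1 := fun z => ⟨w z.1, hwmem z.1 z.2⟩ with hfn
  have hcont : Continuous fn := by
    refine Continuous.subtype_mk ?_ _
    exact hwc.restrict
  have hbij : Function.Bijective fn := by
    constructor
    · intro z z' hzz
      have : w z.1 = w z'.1 := congrArg Subtype.val hzz
      exact Subtype.ext (hwm.injOn z.2 z'.2 this)
    · intro u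
      have hu : u.1 ∈ Set.Icc (w 0) (w 1) := by rw [hw0, hw1]; exact u.2
      obtain ⟨c, hc, hwcu⟩ := intermediate_value_Icc h01 hwc hu
      exact ⟨⟨c, hc⟩, Subtype.ext hwcu⟩
  set eqv : Set.Icc (0:ℝ) 1 ≃ Set.Icc (0:ℝ) 1 := Equiv.ofBijective fn hbij with heqv
  have hcont' : Continuous eqv := hcont
  set homeo : Set.Icc (0:ℝ) 1 ≃ₜ Set.Icc (0:ℝ) 1 := hcont'.homeoOfEquivCompactToT2
  set clamp : ℝ → ℝ := fun u => max 0 (min u 1) with hclamp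
  have hclampmem : ∀ u, clamp u ∈ Set.Icc (0:ℝ) 1 := by
    intro u
    constructor
    · exact le_max_left _ _
    · exact max_le h01 (min_le_right _ _)
  have hclampcont : Continuous clamp :=
    continuous_const.max (continuous_id.min continuous_const)
  have hclampid : ∀ u ∈ Set.Icc (0:ℝ) 1, clamp u = u := by
    intro u hu
    simp only [hclamp]
    rw [min_eq_left hu.2, max_eq_right hu.1]
  refine ⟨fun u => (homeo.symm ⟨clamp u, hclampmem u⟩ : ℝ), ?_, ?_, ?_, ?_⟩
  · exact continuous_subtype_val.comp (homeo.symm.continuous.comp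
      (Continuous.subtype_mk hclampcont _))
  · intro u; exact (homeo.symm _).2
  · intro u hu
    have := homeo.apply_symm_apply ⟨clamp u, hclampmem u⟩
    have h2 : w ((homeo.symm ⟨clamp u, hclampmem u⟩ : ℝ)) = clamp u := by
      have := congrArg Subtype.val this
      exact this
    rw [h2, hclampid u hu]
  · intro c hc
    have hwc' : w c ∈ Set.Icc (0:ℝ) 1 := hwmem c hc
    have h1 : (⟨clamp (w c), hclampmem _⟩ : Set.Icc (0:ℝ) 1) = homeo ⟨c, hc⟩ := by
      apply Subtype.ext
      simp only [hclampid _ hwc']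
      rfl
    show (homeo.symm ⟨clamp (w c), hclampmem _⟩ : ℝ) = c
    rw [h1, homeo.symm_apply_apply]

lemma exists_phi (z : Fin t → ℝ × ℝ) :
    ∃ φ : Fin t → Fin t, ∀ k, z k ≤ z (φ k) ∧ ∀ i, ¬ z (φ k) < z i := by
  have h : ∀ k : Fin t, ∃ m, z k ≤ z m ∧ ∀ i, ¬ z m < z i := by
    intro k
    set s := (univ.image z).filter (fun v => z k ≤ v) with hs
    have hne : s.Nonempty := ⟨z k, by simp [hs]⟩
    obtain ⟨v, hv, hmax'⟩ := Finset.exists_maximal hne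
    have hmax : ∀ x ∈ s, ¬ v < x := fun x hx hlt => lt_irrefl v (lt_of_lt_of_le hlt (hmax' hx hlt.le))
    simp only [hs, mem_filter, mem_image] at hv
    obtain ⟨⟨m, _, hm⟩, hkv⟩ := hv
    refine ⟨m, hm ▸ hkv, ?_⟩
    intro i hi
    have hzi : z i ∈ s := mem_filter.2
      ⟨mem_image.2 ⟨i, mem_univ i, rfl⟩, le_trans hkv (le_of_lt (hm ▸ hi))⟩
    exact hmax (z i) hzi (hm ▸ hi)
  choose φ hφ using h
  exact ⟨φ, hφ⟩

noncomputable def Tmap (φ : Fin t → Fin t) (p : Fin t → ℝ) : Fin t → ℝ :=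
  fun i => ∑ k ∈ univ.filter (fun k => φ k = i), p k

lemma Tmap_nonneg {φ : Fin t → Fin t} {p : Fin t → ℝ} (hp : ∀ j, 0 ≤ p j) (i : Fin t) :
    0 ≤ Tmap φ p i := Finset.sum_nonneg fun k _ => hp k

lemma Tmap_sum (φ : Fin t → Fin t) (p : Fin t → ℝ) : ∑ i, Tmap φ p i = ∑ k, p k := by
  unfold Tmap
  rw [Finset.sum_fiberwise_eq_sum_filter univ univ φ p]
  simp

lemma Tmap_supp {φ : Fin t → Fin t} {p : Fin t → ℝ} {i : Fin t}
    (h : Tmap φ p i ≠ 0) : ∃ k, φ k = i := by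
  by_contra hc
  push_neg at hc
  apply h
  unfold Tmap
  rw [Finset.filter_false_of_mem (fun k _ => hc k), Finset.sum_empty]

lemma SX_Tmap (x : Fin t → ℝ) (φ : Fin t → Fin t) (p : Fin t → ℝ) (c : ℝ) :
    SX x (Tmap φ p) c = ∑ k ∈ univ.filter (fun k => c ≤ x (φ k)), p k := by
  unfold SX Tmap
  rw [Finset.sum_fiberwise_eq_sum_filter univ (univ.filter (fun i => c ≤ x i)) φ p]
  congr 1
  ext k
  simp

lemma SX_le_SX_Tmap {x : Fin t → ℝ} {φ : Fin t → Fin t} {p : Fin t → ℝ}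
    (hp : ∀ j, 0 ≤ p j) (h : ∀ k, x k ≤ x (φ k)) (c : ℝ) :
    SX x p c ≤ SX x (Tmap φ p) c := by
  rw [SX_Tmap]
  refine Finset.sum_le_sum_of_subset_of_nonneg ?_ (fun k _ _ => hp k)
  intro k hk
  simp only [mem_filter, mem_univ, true_and] at hk ⊢
  exact le_trans hk (h k)

lemma SX_Tmap_le {x : Fin t → ℝ} {φ : Fin t → Fin t} {p : Fin t → ℝ}
    (hp : ∀ j, 0 ≤ p j) (h : ∀ k, x (φ k) ≤ x k) (c : ℝ) :
    SX x (Tmap φ p) c ≤ SX x p c := by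
  rw [SX_Tmap]
  refine Finset.sum_le_sum_of_subset_of_nonneg ?_ (fun k _ _ => hp k)
  intro k hk
  simp only [mem_filter, mem_univ, true_and] at hk ⊢
  exact le_trans hk (h k)

lemma sum_eq_of_support_iff {ι : Type*} {A B : Finset ι} {v : ι → ℝ}
    (h : ∀ i, v i ≠ 0 → (i ∈ A ↔ i ∈ B)) : ∑ i ∈ A, v i = ∑ i ∈ B, v i := by
  classical
  have h1 : ∑ i ∈ A ∩ B, v i = ∑ i ∈ A, v i := by
    refine Finset.sum_subset (Finset.inter_subset_left) ?_
    intro i hiA hiAB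
    by_contra hvi
    exact hiAB (Finset.mem_inter.2 ⟨hiA, (h i hvi).1 hiA⟩)
  have h2 : ∑ i ∈ A ∩ B, v i = ∑ i ∈ B, v i := by
    refine Finset.sum_subset (Finset.inter_subset_right) ?_
    intro i hiB hiAB
    by_contra hvi
    exact hiAB (Finset.mem_inter.2 ⟨(h i hvi).2 hiB, hiB⟩)
  rw [← h1, h2]

lemma SX_affine (x : Fin t → ℝ) (u v : ℝ) (p q : Fin t → ℝ) (c : ℝ) :
    SX x (fun i => u * p i + v * q i) c = u * SX x p c + v * SX x q c := by
  unfold SX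
  rw [Finset.sum_add_distrib, Finset.mul_sum, Finset.mul_sum]

end SDCC


open SDCC Finset in
/-- for any probability weighting function `w` and nonnegative
outcome profiles `x, y`, the single-deviation constraint set
`{p ∈ Δ^{t−1} : Ṽ(p,x) ≥ Ṽ(p,y)}` is a connected subset of the simplex. -/
theorem single_deviation_constraint_set_connected {t : ℕ} (w : ℝ → ℝ)
    (hwc : ContinuousOn w (Set.Icc 0 1)) (hwm : StrictMonoOn w (Set.Icc 0 1))
    (hw0 : w 0 = 0) (hw1 : w 1 = 1)
    (x y : Fin t → ℝ) (hx : ∀ j, 0 ≤ x j) (hy : ∀ j, 0 ≤ y j) :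
    IsPreconnected {p : Fin t → ℝ | IsProbVec p ∧ tildeV w p y ≤ tildeV w p x} := by
  classical
  set S := {p : Fin t → ℝ | IsProbVec p ∧ tildeV w p y ≤ tildeV w p x} with hSdef
  rcases Set.eq_empty_or_nonempty S with hSe | ⟨p0, hp0⟩
  · rw [hSe]; exact isPreconnected_empty
  obtain ⟨Winv, hWc, hWmem, hwW, hWw⟩ := exists_winv hwc hwm hw0 hw1
  have hwmem : ∀ c ∈ Set.Icc (0:ℝ) 1, w c ∈ Set.Icc (0:ℝ) 1 := by
    intro c hc
    constructor
    · rw [← hw0]; exact hwm.monotoneOn ⟨le_refl 0, zero_le_one⟩ hc hc.1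
    · rw [← hw1]; exact hwm.monotoneOn hc ⟨zero_le_one, le_refl 1⟩ hc.2
  have hWmono : ∀ u u', u ∈ Set.Icc (0:ℝ) 1 → u' ∈ Set.Icc (0:ℝ) 1 → u ≤ u' →
      Winv u ≤ Winv u' := by
    intro u u' hu hu' huu
    by_contra hlt
    push_neg at hlt
    have := hwm (hWmem u') (hWmem u) hlt
    rw [hwW u hu, hwW u' hu'] at this
    exact absurd huu (not_le.2 this)
  set z : Fin t → ℝ × ℝ := fun i => (x i, -y i) with hz
  obtain ⟨φ, hφ⟩ := exists_phi z
  set M : Fin t → Prop := fun i => ∀ i', ¬ z i < z i' with hM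
  have hφx : ∀ k, x k ≤ x (φ k) := fun k => ((hφ k).1).1
  have hφy : ∀ k, y (φ k) ≤ y k := by
    intro k
    have h2 := ((hφ k).1).2
    simp only [hz] at h2
    linarith
  have hφM : ∀ k, M (φ k) := fun k => (hφ k).2
  have hcomono : ∀ i k, M i → M k → x i ≤ x k → y i ≤ y k := by
    intro i k hi hk hxik
    by_contra hyik
    push_neg at hyik
    refine hi k (Prod.lt_iff.2 (Or.inr ⟨hxik, ?_⟩))
    simp only [hz]
    linarith
  have hSmono : ∀ p r, p ∈ S → IsProbVec r →
      (∀ c, SX x p c ≤ SX x r c) → (∀ c, SX y r c ≤ SX y p c) → r ∈ S := by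
    intro p r hp hr h1 h2
    exact ⟨hr, le_trans (tildeV_le hwm hw0 hy hr hp.1 h2)
      (le_trans hp.2 (tildeV_le hwm hw0 hx hp.1 hr h1))⟩
  set T : (Fin t → ℝ) → (Fin t → ℝ) := Tmap φ with hT
  have hTprob : ∀ p, IsProbVec p → IsProbVec (T p) := by
    intro p hp
    exact ⟨Tmap_nonneg (φ := φ) hp.1, by rw [hT, Tmap_sum]; exact hp.2⟩
  have hTsupp : ∀ p i, ¬ M i → T p i = 0 := by
    intro p i hMi
    by_contra h
    obtain ⟨k, hk⟩ := Tmap_supp h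
    exact hMi (hk ▸ hφM k)
  have hseg : ∀ p, p ∈ S → segment ℝ p (T p) ⊆ S := by
    intro p hp r hr
    obtain ⟨u, v, hu, hv, huv, rfl⟩ := hr
    have hkey : (u • p + v • T p) = fun i => u * p i + v * T p i := rfl
    rw [hkey]
    have hprob : IsProbVec (fun i => u * p i + v * T p i) := by
      constructor
      · intro i
        have h1 := hp.1.1 i
        have h2 := Tmap_nonneg (φ := φ) hp.1.1 i
        have := mul_nonneg hu h1
        have := mul_nonneg hv h2
        change 0 ≤ u * p i + v * T p i
        have h2' : 0 ≤ v * T p i := mul_nonneg hv h2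
        linarith [mul_nonneg hu h1]
      · rw [Finset.sum_add_distrib, ← Finset.mul_sum, ← Finset.mul_sum, hp.1.2]
        rw [show (∑ i, T p i) = 1 from by rw [hT, Tmap_sum]; exact hp.1.2]
        linarith
    refine hSmono p _ hp hprob ?_ ?_
    · intro c
      rw [SX_affine]
      have h1 := SX_le_SX_Tmap hp.1.1 hφx c
      have h2 := mul_le_mul_of_nonneg_left h1 hv
      calc SX x p c = u * SX x p c + v * SX x p c := by rw [← add_mul, huv, one_mul]
        _ ≤ u * SX x p c + v * SX x (T p) c := by linarith
    · intro c
      rw [SX_affine]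
      have h1 := SX_Tmap_le (x := y) hp.1.1 hφy c
      have h2 := mul_le_mul_of_nonneg_left h1 hv
      calc u * SX y p c + v * SX y (T p) c ≤ u * SX y p c + v * SX y p c := by linarith
        _ = SX y p c := by rw [← add_mul, huv, one_mul]
  have halign : ∀ c, ∃ m ≤ t, ∀ v : Fin t → ℝ,
      (∀ i, ¬ M i → v i = 0) → SX y v c = cums x v m := by
    intro c
    by_cases hne : ((univ : Finset (Fin t)).filter (fun i => M i ∧ c ≤ y i)).Nonempty
    · obtain ⟨i0, hi0, hmin⟩ := Finset.exists_min_image _ x hne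
      simp only [mem_filter, mem_univ, true_and] at hi0
      obtain ⟨m, hm, hpre⟩ := exists_prefix hx (x i0)
      refine ⟨m, hm, ?_⟩
      intro v hv
      rw [← hpre v]
      unfold SX
      refine sum_eq_of_support_iff ?_
      intro i hvi
      have hMi : M i := by
        by_contra hMi
        exact hvi (hv i hMi)
      simp only [mem_filter, mem_univ, true_and]
      constructor
      · intro hci
        exact hmin i (mem_filter.2 ⟨mem_univ i, hMi, hci⟩)
      · intro hxi
        exact le_trans hi0.2 (hcomono i0 i hi0.1 hMi hxi)
    · rw [Finset.not_nonempty_iff_eq_empty, Finset.filter_eq_empty_iff] at hne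
      refine ⟨0, Nat.zero_le t, ?_⟩
      intro v hv
      have h0 : SX y v c = 0 := by
        unfold SX
        refine Finset.sum_eq_zero ?_
        intro i hi
        simp only [mem_filter, mem_univ, true_and] at hi
        by_cases hMi : M i
        · exact absurd ⟨hMi, hi⟩ (hne (mem_univ i))
        · exact hv i hMi
      rw [h0]
      simp [cums]
  have hinterp : ∀ p q, p ∈ S → q ∈ S → (∀ i, ¬ M i → p i = 0) → (∀ i, ¬ M i → q i = 0) →
      ∃ K : Set (Fin t → ℝ), K ⊆ S ∧ p ∈ K ∧ q ∈ K ∧ IsPreconnected K := by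
    intro p q hpS hqS hpM hqM
    have hpP : IsProbVec p := hpS.1
    have hqP : IsProbVec q := hqS.1
    set val : ℝ → ℕ → ℝ := fun τ m => (1-τ) * w (cums x p m) + τ * w (cums x q m) with hval
    set pth : ℝ → (Fin t → ℝ) := fun τ i =>
      Winv (val τ (((sp x).symm i : ℕ) + 1)) - Winv (val τ ((sp x).symm i : ℕ)) with hpth
    have hcumsp : ∀ m, cums x p m ∈ Set.Icc (0:ℝ) 1 :=
      fun m => ⟨cums_nonneg hpP.1 m, cums_le_one hpP.1 hpP.2 m⟩
    have hcumsq : ∀ m, cums x q m ∈ Set.Icc (0:ℝ) 1 :=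
      fun m => ⟨cums_nonneg hqP.1 m, cums_le_one hqP.1 hqP.2 m⟩
    have hvalmem : ∀ τ ∈ Set.Icc (0:ℝ) 1, ∀ m, val τ m ∈ Set.Icc (0:ℝ) 1 := by
      intro τ hτ m
      have h1 := hwmem _ (hcumsp m)
      have h2 := hwmem _ (hcumsq m)
      have hτ1 : (0:ℝ) ≤ 1 - τ := by linarith [hτ.2]
      constructor
      · have := mul_nonneg hτ1 h1.1
        have := mul_nonneg hτ.1 h2.1
        simp only [hval]
        linarith
      · have := mul_le_mul_of_nonneg_left h1.2 hτ1
        have := mul_le_mul_of_nonneg_left h2.2 hτ.1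
        simp only [hval]
        linarith
    have hvalmono : ∀ τ ∈ Set.Icc (0:ℝ) 1, ∀ m m', m ≤ m' → val τ m ≤ val τ m' := by
      intro τ hτ m m' hmm
      have h1 := hwm.monotoneOn (hcumsp m) (hcumsp m') (cums_mono hpP.1 hmm)
      have h2 := hwm.monotoneOn (hcumsq m) (hcumsq m') (cums_mono hqP.1 hmm)
      have hτ1 : (0:ℝ) ≤ 1 - τ := by linarith [hτ.2]
      have := mul_le_mul_of_nonneg_left h1 hτ1
      have := mul_le_mul_of_nonneg_left h2 hτ.1
      simp only [hval]
      linarith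
    have hsv_pth : ∀ τ : ℝ, ∀ k, (h : k < t) →
        sv x (pth τ) k = Winv (val τ (k+1)) - Winv (val τ k) := by
      intro τ k hk
      simp only [sv, dif_pos hk, hpth]
      rw [Equiv.symm_apply_apply]
    have hval0 : ∀ τ : ℝ, val τ 0 = 0 := by
      intro τ
      simp [hval, cums, hw0]
    have hWinv0 : Winv 0 = 0 := by
      have := hWw 0 ⟨le_refl 0, zero_le_one⟩
      rwa [hw0] at this
    have hcums_pth : ∀ τ : ℝ, ∀ m, m ≤ t → cums x (pth τ) m = Winv (val τ m) := by
      intro τ m hmt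
      unfold cums
      rw [Finset.sum_congr rfl (fun k hk => hsv_pth τ k (lt_of_lt_of_le (mem_range.1 hk) hmt))]
      rw [Finset.sum_range_sub (fun k => Winv (val τ k)) m]
      rw [hval0, hWinv0, sub_zero]
    have hcumspt : cums x p t = 1 := by rw [cums_of_t_le (le_refl t), hpP.2]
    have hcumsqt : cums x q t = 1 := by rw [cums_of_t_le (le_refl t), hqP.2]
    have hvalt : ∀ τ : ℝ, val τ t = 1 := by
      intro τ
      simp only [hval, hcumspt, hcumsqt, hw1]
      ring
    have hWinv1 : Winv 1 = 1 := by
      have := hWw 1 ⟨zero_le_one, le_refl 1⟩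
      rwa [hw1] at this
    have hprob : ∀ τ ∈ Set.Icc (0:ℝ) 1, IsProbVec (pth τ) := by
      intro τ hτ
      constructor
      · intro i
        have h1 := hvalmono τ hτ _ _ (Nat.le_succ ((sp x).symm i : ℕ))
        have h2 := hWmono _ _ (hvalmem τ hτ _) (hvalmem τ hτ _) h1
        simp only [hpth]
        linarith
      · have h1 : ∑ j, pth τ j = cums x (pth τ) t := (cums_of_t_le (le_refl t)).symm
        rw [h1, hcums_pth τ t (le_refl t), hvalt, hWinv1]
    have hsupp : ∀ τ : ℝ, ∀ i, ¬ M i → pth τ i = 0 := by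
      intro τ i hMi
      have hsv_p : sv x p ((sp x).symm i : ℕ) = 0 := by
        rw [sv_apply x p ((sp x).symm i), Equiv.apply_symm_apply]
        exact hpM i hMi
      have hsv_q : sv x q ((sp x).symm i : ℕ) = 0 := by
        rw [sv_apply x q ((sp x).symm i), Equiv.apply_symm_apply]
        exact hqM i hMi
      have hcp : cums x p (((sp x).symm i : ℕ) + 1) = cums x p ((sp x).symm i : ℕ) := by
        unfold cums
        rw [Finset.sum_range_succ, hsv_p, add_zero]
      have hcq : cums x q (((sp x).symm i : ℕ) + 1) = cums x q ((sp x).symm i : ℕ) := by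
        unfold cums
        rw [Finset.sum_range_succ, hsv_q, add_zero]
      simp only [hpth, hval, hcp, hcq, sub_self]
    have hfx : ∀ τ ∈ Set.Icc (0:ℝ) 1,
        tildeV w (pth τ) x = (1-τ) * tildeV w p x + τ * tildeV w q x := by
      intro τ hτ
      rw [tildeV_eq_sum hw0 hx (pth τ), tildeV_eq_sum hw0 hx p, tildeV_eq_sum hw0 hx q]
      rw [Finset.mul_sum, Finset.mul_sum, ← Finset.sum_add_distrib]
      refine Finset.sum_congr rfl fun j hj => ?_
      have hjt : j < t := mem_range.1 hj
      rw [hcums_pth τ (j+1) (by omega), hwW _ (hvalmem τ hτ (j+1))]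
      simp only [hval]
      ring
    have hfy : ∀ τ ∈ Set.Icc (0:ℝ) 1,
        tildeV w (pth τ) y = (1-τ) * tildeV w p y + τ * tildeV w q y := by
      intro τ hτ
      rw [tildeV_eq_sum hw0 hy (pth τ), tildeV_eq_sum hw0 hy p, tildeV_eq_sum hw0 hy q]
      rw [Finset.mul_sum, Finset.mul_sum, ← Finset.sum_add_distrib]
      refine Finset.sum_congr rfl fun j hj => ?_
      have hjt : j < t := mem_range.1 hj
      by_cases hdj : sv y y (j+1) < sv y y j
      · have hdrop : ∀ k, j < k → k < t → sv y y k < sv y y j := fun k hk hkt =>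
          lt_of_le_of_lt (sv_anti hy (by omega : j+1 ≤ k)) hdj
        obtain ⟨m, hm, halg⟩ := halign (sv y y j)
        rw [cums_eq_SX hy (pth τ) hjt hdrop, cums_eq_SX hy p hjt hdrop,
            cums_eq_SX hy q hjt hdrop]
        rw [halg (pth τ) (hsupp τ), halg p hpM, halg q hqM]
        rw [hcums_pth τ m hm, hwW _ (hvalmem τ hτ m)]
        simp only [hval]
        ring
      · have hd : sv y y (j+1) ≤ sv y y j := sv_anti hy (Nat.le_succ j)
        have h0 : sv y y j - sv y y (j+1) = 0 := by
          have := not_lt.1 hdj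
          linarith
        rw [h0]
        ring
    have hcont : Continuous pth := by
      refine continuous_pi ?_
      intro i
      have hc1 : ∀ m : ℕ, Continuous (fun τ => Winv (val τ m)) := by
        intro m
        refine hWc.comp ?_
        simp only [hval]
        exact ((continuous_const.sub continuous_id).mul continuous_const).add
          (continuous_id.mul continuous_const)
      exact (hc1 _).sub (hc1 _)
    have hv0 : ∀ m : ℕ, val 0 m = w (cums x p m) := by
      intro m
      simp [hval]
    have hv1 : ∀ m : ℕ, val 1 m = w (cums x q m) := by
      intro m
      simp [hval]
    refine ⟨pth '' Set.Icc 0 1, ?_, ?_, ?_, ?_⟩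
    · rintro r ⟨τ, hτ, rfl⟩
      refine ⟨hprob τ hτ, ?_⟩
      rw [hfx τ hτ, hfy τ hτ]
      have h1 := hpS.2
      have h2 := hqS.2
      have hτ1 : (0:ℝ) ≤ 1 - τ := by linarith [hτ.2]
      have := mul_le_mul_of_nonneg_left h1 hτ1
      have := mul_le_mul_of_nonneg_left h2 hτ.1
      linarith
    · refine ⟨0, ⟨le_refl 0, zero_le_one⟩, ?_⟩
      funext i
      simp only [hpth, hv0]
      rw [hWw _ (hcumsp _), hWw _ (hcumsp _)]
      unfold cums
      rw [Finset.sum_range_succ]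
      rw [show sv x p ((sp x).symm i : ℕ) = p i from by
        rw [sv_apply x p ((sp x).symm i), Equiv.apply_symm_apply]]
      ring
    · refine ⟨1, ⟨zero_le_one, le_refl 1⟩, ?_⟩
      funext i
      simp only [hpth, hv1]
      rw [hWw _ (hcumsq _), hWw _ (hcumsq _)]
      unfold cums
      rw [Finset.sum_range_succ]
      rw [show sv x q ((sp x).symm i : ℕ) = q i from by
        rw [sv_apply x q ((sp x).symm i), Equiv.apply_symm_apply]]
      ring
    · exact isPreconnected_Icc.image pth hcont.continuousOn
  refine isPreconnected_of_forall p0 ?_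
  intro q hq
  have hTp0 : T p0 ∈ S := hseg p0 hp0 (right_mem_segment ℝ p0 (T p0))
  have hTq : T q ∈ S := hseg q hq (right_mem_segment ℝ q (T q))
  obtain ⟨K, hKS, hK1, hK2, hKpre⟩ := hinterp (T p0) (T q) hTp0 hTq (hTsupp p0) (hTsupp q)
  refine ⟨segment ℝ p0 (T p0) ∪ (K ∪ segment ℝ q (T q)), ?_, ?_, ?_, ?_⟩
  · exact Set.union_subset (hseg p0 hp0) (Set.union_subset hKS (hseg q hq))
  · exact Or.inl (left_mem_segment ℝ p0 (T p0))
  · exact Or.inr (Or.inr (left_mem_segment ℝ q (T q)))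
  · refine IsPreconnected.union (T p0) (right_mem_segment ℝ p0 (T p0)) (Or.inl hK1)
      ((convex_segment p0 (T p0)).isPreconnected) ?_
    exact IsPreconnected.union (T q) hK2 (right_mem_segment ℝ q (T q)) hKpre
      ((convex_segment q (T q)).isPreconnected)
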